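/- Let R be a commutative unitary ring whose multiplicative semigroup has finite Erdős-Burgess constant. Then the Jacobson radical J(R) is finite. -/

import Mathlib

/-- Product of the nonempty list `a :: l` in a semigroup. -/
def sprod {α : Type*} [Mul α] (a : α) (l : List α) : α := l.foldl (· * ·) a

/-- A list is idempotent-product free if no nonempty sublist has idempotent product. -/
def IdemProdFree {α : Type*} [Mul α] (l : List α) : Prop :=
  ∀ (a : α) (t : List α), (a :: t).Sublist l → ¬ IsIdempotentElem (sprod a t)

/-- The Erdős–Burgess constant of a (commutative) semigroup, as an extended natural:
the supremum of `|T| + 1` over all idempotent-product free sequences `T`. -/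
noncomputable def EB (α : Type*) [Mul α] : ℕ∞ :=
  ⨆ l ∈ {l : List α | IdemProdFree l}, ((l.length : ℕ∞) + 1)

section aux
variable {R : Type*} [CommRing R]

lemma sprod_eq_prod (a : R) (t : List R) : sprod a t = (a :: t).prod := by
  induction t generalizing a with
  | nil => simp [sprod]
  | cons b t ih =>
    have h1 := ih (a * b)
    simp only [sprod, List.foldl_cons] at h1 ⊢
    rw [h1]
    simp [List.prod_cons, mul_assoc]

def Sset (R : Type*) [CommRing R] : Set R :=
  {x | ∃ j ∈ Ideal.jacobson (⊥ : Ideal R), x = 1 + j}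

lemma one_mem_S : (1 : R) ∈ Sset R := ⟨0, by simp⟩

lemma mul_mem_S {x y : R} (hx : x ∈ Sset R) (hy : y ∈ Sset R) : x * y ∈ Sset R := by
  obtain ⟨i, hi, rfl⟩ := hx; obtain ⟨j, hj, rfl⟩ := hy
  exact ⟨i + j + i * j, by
    refine add_mem (add_mem hi hj) (Ideal.mul_mem_right _ _ hi), by ring⟩

lemma prod_mem_S {l : List R} (h : ∀ x ∈ l, x ∈ Sset R) : l.prod ∈ Sset R := by
  induction l with
  | nil => simpa using one_mem_S
  | cons a t ih =>
    rw [List.prod_cons]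
    exact mul_mem_S (h a (by simp)) (ih fun x hx => h x (by simp [hx]))

lemma isUnit_of_mem_S {x : R} (hx : x ∈ Sset R) : IsUnit x := by
  obtain ⟨j, hj, rfl⟩ := hx
  have := Ideal.mem_jacobson_bot.mp hj 1
  simpa [add_comm] using this

lemma eq_one_of_idem_S {x : R} (hx : x ∈ Sset R) (h : IsIdempotentElem x) : x = 1 := by
  have hu := isUnit_of_mem_S hx
  have : x * x = x * 1 := by simpa [IsIdempotentElem] using h
  exact hu.mul_left_cancel this
lemma exists_idemfree_list (hinf : (Sset R).Infinite) :
    ∀ n, ∃ l : List R, l.length = n ∧ IdemProdFree l ∧ ∀ x ∈ l, x ∈ Sset R := by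
  intro n
  induction n with
  | zero =>
    refine ⟨[], rfl, fun a t hs => absurd (List.sublist_nil.mp hs) (by simp), by simp⟩
  | succ n ih =>
    obtain ⟨l, hlen, hfree, hS⟩ := ih
    classical
    set P : Finset R := (l.sublists.map List.prod).toFinset with hP
    set Bad : Set R := ⋃ p ∈ P, {u | p * u = 1} with hB
    have hBadfin : Bad.Finite := by
      refine Set.Finite.biUnion P.finite_toSet (fun p _ => Set.Subsingleton.finite ?_)
      intro u hu v hv
      simp only [Set.mem_setOf_eq] at hu hv
      calc u = u * (p * v) := by rw [hv, mul_one]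
        _ = v * (p * u) := by ring
        _ = v := by rw [hu, mul_one]
    obtain ⟨u, huS, huB⟩ := (hinf.diff hBadfin).nonempty
    refine ⟨l ++ [u], by simp [hlen], ?_, ?_⟩
    · intro a t hs hidem
      rw [sprod_eq_prod] at hidem
      rw [List.sublist_append_iff] at hs
      obtain ⟨s1, s2, heq, h1, h2⟩ := hs
      rcases List.sublist_singleton.mp h2 with rfl | rfl
      · rw [List.append_nil] at heq
        exact hfree a t (heq ▸ h1) (by rw [sprod_eq_prod]; exact hidem)
      · have hs1S : ∀ x ∈ s1, x ∈ Sset R := fun x hx => hS x (h1.subset hx)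
        have hmem : (a :: t).prod ∈ Sset R := by
          refine prod_mem_S fun x hx => ?_
          rw [heq, List.mem_append] at hx
          rcases hx with hx | hx
          · exact hs1S x hx
          · simp at hx; subst hx; exact huS
        have h1' : (a :: t).prod = 1 := eq_one_of_idem_S hmem hidem
        rw [heq, List.prod_append, List.prod_singleton] at h1'
        exact huB (Set.mem_biUnion (by rw [hP]; exact List.mem_toFinset.mpr (List.mem_map.mpr ⟨s1, List.mem_sublists.mpr h1, rfl⟩)) h1')
    · intro x hx
      rcases List.mem_append.mp hx with hx | hx
      · exact hS x hx
      · simp at hx; subst hx; exact huS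

end aux

theorem stmt_9 (R : Type*) [CommRing R] (h : EB R ≠ ⊤) :
    Finite (Ideal.jacobson (⊥ : Ideal R)) := by
  by_contra hfin
  have hinf : Infinite (Ideal.jacobson (⊥ : Ideal R)) := not_finite_iff_infinite.mp hfin
  have hJ : ((Ideal.jacobson (⊥ : Ideal R) : Ideal R) : Set R).Infinite :=
    Set.infinite_coe_iff.mp hinf
  have hSinf : (Sset R).Infinite := by
    have heq : Sset R = (fun j => 1 + j) '' ↑(Ideal.jacobson (⊥ : Ideal R)) := by
      ext x
      simp only [Sset, Set.mem_setOf_eq, Set.mem_image, SetLike.mem_coe]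
      constructor
      · rintro ⟨j, hj, rfl⟩; exact ⟨j, hj, rfl⟩
      · rintro ⟨j, hj, rfl⟩; exact ⟨j, hj, rfl⟩
    rw [heq]
    exact hJ.image ((add_right_injective 1).injOn)
  obtain ⟨N, hN⟩ := WithTop.ne_top_iff_exists.mp h
  obtain ⟨l, hlen, hfree, -⟩ := exists_idemfree_list hSinf (N + 1)
  have hle : ((l.length : ℕ∞) + 1) ≤ EB R :=
    le_iSup₂ (f := fun (l : List R) (_ : l ∈ {l : List R | IdemProdFree l}) =>
      ((l.length : ℕ∞) + 1)) l hfree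
  rw [hlen, ← hN] at hle
  have h2 : ((N + 1 + 1 : ℕ) : ℕ∞) ≤ ((N : ℕ) : ℕ∞) := by push_cast at hle ⊢; exact hle
  have := Nat.cast_le.mp h2
  omega
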